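/- For any graph G, vertices u, v and depth ℓ ≥ 0: two vertices receive the same 1-WL color after ℓ rounds (starting from a common constant initial coloring) if and only if their depth-ℓ unfolding trees are isomorphic as rooted trees. -/
import Mathlib


open scoped Classical

namespace RSNN

/-- The type of (free, injectively-hashed) 1-WL colors after `t` rounds. -/
def WLColorType (σ : Type) : ℕ → Type
  | 0 => σ
  | t + 1 => WLColorType σ t × Multiset (WLColorType σ t)

/-- The 1-dimensional Weisfeiler–Lehman color refinement: round `t+1` (injectively)
hashes the current color of `u` with the multiset of its neighbors' colors. -/
noncomputable def WL {V : Type} [Fintype V] [DecidableEq V]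
    (G : SimpleGraph V) [DecidableRel G.Adj] {σ : Type} (π0 : V → σ) :
    (t : ℕ) → V → WLColorType σ t
  | 0 => π0
  | t + 1 => fun u => (WL G π0 t u, (G.neighborFinset u).val.map (WL G π0 t))

/-- Rooted-tree shapes of depth at most `ℓ`, with children collected as a multiset,
so that equality of values is exactly rooted-tree isomorphism. -/
def UT : ℕ → Type
  | 0 => Unit
  | ℓ + 1 => Multiset (UT ℓ)

/-- The depth-`ℓ` unfolding tree of `G` rooted at `u`, as a rooted tree shape:
the root's children are fresh copies of the depth-`(ℓ-1)` unfolding trees of the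
neighbors of `u`. -/
noncomputable def unfoldT {V : Type} [Fintype V] [DecidableEq V]
    (G : SimpleGraph V) [DecidableRel G.Adj] : (ℓ : ℕ) → V → UT ℓ
  | 0 => fun _ => ()
  | ℓ + 1 => fun u => (G.neighborFinset u).val.map (unfoldT G ℓ)

/-- Extract the unfolding-tree shape from a WL color. -/
def phi : (ℓ : ℕ) → WLColorType Unit ℓ → UT ℓ
  | 0 => id
  | ℓ + 1 => fun p => p.2.map (phi ℓ)

lemma phi_WL {V : Type} [Fintype V] [DecidableEq V]
    (G : SimpleGraph V) [DecidableRel G.Adj] (ℓ : ℕ) (u : V) :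
    phi ℓ (WL G (fun _ => ()) ℓ u) = unfoldT G ℓ u := by
  induction ℓ generalizing u with
  | zero => rfl
  | succ ℓ ih =>
    show ((G.neighborFinset u).val.map (WL G (fun _ => ()) ℓ)).map (phi ℓ)
        = (G.neighborFinset u).val.map (unfoldT G ℓ)
    rw [Multiset.map_map]
    exact Multiset.map_congr rfl fun w _ => ih w

/-- Truncation of a depth-`ℓ+1` tree shape to depth `ℓ`. -/
def trunc : (ℓ : ℕ) → UT (ℓ + 1) → UT ℓ
  | 0 => fun _ => ()
  | ℓ + 1 => fun T => (T : Multiset (UT (ℓ + 1))).map (trunc ℓ)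

lemma trunc_unfoldT {V : Type} [Fintype V] [DecidableEq V]
    (G : SimpleGraph V) [DecidableRel G.Adj] (ℓ : ℕ) (u : V) :
    trunc ℓ (unfoldT G (ℓ + 1) u) = unfoldT G ℓ u := by
  induction ℓ generalizing u with
  | zero => rfl
  | succ ℓ ih =>
    show ((G.neighborFinset u).val.map (unfoldT G (ℓ + 1))).map (trunc ℓ)
        = (G.neighborFinset u).val.map (unfoldT G ℓ)
    rw [Multiset.map_map]
    exact Multiset.map_congr rfl fun w _ => ih w

/-- Starting from a common constant initial coloring, two vertices
receive the same 1-WL color after `ℓ` rounds iff their depth-`ℓ` unfolding trees are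
isomorphic as rooted trees. -/
theorem WL_eq_iff_unfoldingTree_iso {V : Type} [Fintype V] [DecidableEq V]
    (G : SimpleGraph V) [DecidableRel G.Adj] (ℓ : ℕ) (u v : V) :
    WL G (fun _ => ()) ℓ u = WL G (fun _ => ()) ℓ v ↔ unfoldT G ℓ u = unfoldT G ℓ v := by
  induction ℓ generalizing u v with
  | zero => exact ⟨fun _ => rfl, fun _ => rfl⟩
  | succ ℓ ih =>
    constructor
    · intro h
      rw [← phi_WL G (ℓ + 1) u, ← phi_WL G (ℓ + 1) v, h]
    · intro h
      have h0 : unfoldT G ℓ u = unfoldT G ℓ v := by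
        rw [← trunc_unfoldT G ℓ u, ← trunc_unfoldT G ℓ v, h]
      have hw : WL G (fun _ => ()) ℓ u = WL G (fun _ => ()) ℓ v := (ih u v).mpr h0
      have hft : Function.FactorsThrough (WL G (fun _ => ()) ℓ) (unfoldT G ℓ) :=
        fun a b hab => (ih a b).mpr hab
      set hfun := Function.extend (unfoldT G ℓ) (WL G (fun _ => ()) ℓ)
        (fun _ => WL G (fun _ => ()) ℓ u) with hdef
      have key : ∀ w, hfun (unfoldT G ℓ w) = WL G (fun _ => ()) ℓ w :=
        fun w => hft.extend_apply _ w
      show (WL G (fun _ => ()) ℓ u, (G.neighborFinset u).val.map (WL G (fun _ => ()) ℓ))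
          = (WL G (fun _ => ()) ℓ v, (G.neighborFinset v).val.map (WL G (fun _ => ()) ℓ))
      have hmaps : ∀ w : V, (G.neighborFinset w).val.map (WL G (fun _ => ()) ℓ)
          = ((G.neighborFinset w).val.map (unfoldT G ℓ)).map hfun := by
        intro w
        rw [Multiset.map_map]
        exact Multiset.map_congr rfl fun x _ => (key x).symm
      have h' : (G.neighborFinset u).val.map (unfoldT G ℓ)
          = (G.neighborFinset v).val.map (unfoldT G ℓ) := h
      rw [Prod.mk.injEq]
      exact ⟨hw, by rw [hmaps u, hmaps v, h']⟩

end RSNN
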